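/- Let q ∈ ℂ* not a root of unity, β ∈ ℂ*, j ≥ 1, and let b(s) = Σ_{ℓ=0}^{d} α_ℓ / (s − q^ℓ β)^j be a rational function with poles only on the q-orbit of β, all of order j. If b is q-summable in ℂ(s) (i.e. b(s) = f(qs) − f(s) for some f ∈ ℂ(s)), then the q-residue Σ_{ℓ=0}^{d} q^{−ℓ j} α_ℓ equals 0. -/

import Mathlib

/-- The substitution `s ↦ q s` on rational functions over `ℂ`. -/
noncomputable def qDil (q : ℂ) (f : RatFunc ℂ) : RatFunc ℂ :=
  RatFunc.eval (RatFunc.C : ℂ →+* RatFunc ℂ) (RatFunc.C q * RatFunc.X) f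

open Polynomial HahnSeries

noncomputable section
namespace QRes

variable (q : ℂ)

/-- Scaling a Laurent series: multiply the `n`-th coefficient by `q ^ n`. -/
def scaleFun (g : LaurentSeries ℂ) : LaurentSeries ℂ where
  coeff n := q ^ n * g.coeff n
  isPWO_support' := g.isPWO_support.mono (fun n hn => by
    simp only [Function.mem_support] at hn ⊢
    intro h
    exact hn (by rw [h, mul_zero]))

@[simp] lemma scaleFun_coeff (g : LaurentSeries ℂ) (n : ℤ) :
    (scaleFun q g).coeff n = q ^ n * g.coeff n := rfl

lemma scaleFun_support (hq0 : q ≠ 0) (g : LaurentSeries ℂ) :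
    (scaleFun q g).support = g.support := by
  ext n
  simp [HahnSeries.support, Function.mem_support, mul_eq_zero, zpow_ne_zero n hq0]

/-- Scaling on Laurent series as a ring homomorphism. -/
def scaleHom (hq0 : q ≠ 0) : LaurentSeries ℂ →+* LaurentSeries ℂ where
  toFun := scaleFun q
  map_one' := by
    ext n
    rw [scaleFun_coeff, ← HahnSeries.single_zero_one, HahnSeries.coeff_single]
    split_ifs with h
    · subst h; simp
    · simp
  map_mul' x y := by
    ext n
    have hAD : Finset.antidiagonal (scaleFun q x).isPWO_support
        (scaleFun q y).isPWO_support n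
        = Finset.antidiagonal x.isPWO_support y.isPWO_support n := by
      ext ij
      simp only [Finset.mem_addAntidiagonal, scaleFun_support q hq0]
    rw [scaleFun_coeff, HahnSeries.coeff_mul, HahnSeries.coeff_mul, hAD, Finset.mul_sum]
    refine Finset.sum_congr rfl (fun ij hij => ?_)
    rw [Finset.mem_addAntidiagonal] at hij
    rw [scaleFun_coeff, scaleFun_coeff, ← hij.2.2, zpow_add₀ hq0]
    ring
  map_zero' := by ext n; simp
  map_add' x y := by ext n; simp [mul_add]

@[simp] lemma scaleHom_coeff (hq0 : q ≠ 0) (g : LaurentSeries ℂ) (n : ℤ) :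
    (scaleHom q hq0 g).coeff n = q ^ n * g.coeff n := rfl

lemma scaleHom_single (hq0 : q ≠ 0) (m : ℤ) (a : ℂ) :
    scaleHom q hq0 (HahnSeries.single m a) = HahnSeries.single m (q ^ m * a) := by
  ext n
  rw [scaleHom_coeff, HahnSeries.coeff_single, HahnSeries.coeff_single]
  split_ifs with h
  · subst h; rfl
  · simp

lemma scaleHom_C (hq0 : q ≠ 0) (a : ℂ) :
    scaleHom q hq0 (HahnSeries.C a) = HahnSeries.C a := by
  rw [HahnSeries.C_apply, scaleHom_single, zpow_zero, one_mul]


open scoped nonZeroDivisors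

open scoped nonZeroDivisors

open scoped RatFunc

variable (q : ℂ)

/-- The substitution `X ↦ q X` on polynomials, as a ring hom. -/
def dilPoly : ℂ[X] →+* ℂ[X] := Polynomial.eval₂RingHom (Polynomial.C : ℂ →+* ℂ[X]) (C q * X)

lemma dilPoly_apply (p : ℂ[X]) : dilPoly q p = p.comp (C q * X) := rfl

lemma dilPoly_comp_inv (hq0 : q ≠ 0) (p : ℂ[X]) :
    (dilPoly q p).comp (C q⁻¹ * X) = p := by
  rw [dilPoly_apply, Polynomial.comp_assoc]
  have : (C q * X).comp (C q⁻¹ * X) = X := by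
    rw [Polynomial.mul_comp, Polynomial.C_comp, Polynomial.X_comp, ← mul_assoc, ← Polynomial.C_mul,
      mul_inv_cancel₀ hq0, Polynomial.C_1, one_mul]
  rw [this, Polynomial.comp_X]

lemma dilPoly_mem_nonZeroDivisors (hq0 : q ≠ 0) : ℂ[X]⁰ ≤ ℂ[X]⁰.comap (dilPoly q) := by
  intro p hp
  rw [Submonoid.mem_comap, mem_nonZeroDivisors_iff_ne_zero]
  rw [mem_nonZeroDivisors_iff_ne_zero] at hp
  intro h
  apply hp
  have := congrArg (fun r : ℂ[X] => r.comp (C q⁻¹ * X)) h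
  simpa [dilPoly_comp_inv q hq0 p] using this

/-- The substitution `X ↦ q X` on rational functions, as a ring hom. -/
def dilRF (hq0 : q ≠ 0) : RatFunc ℂ →+* RatFunc ℂ :=
  RatFunc.mapRingHom (dilPoly q) (dilPoly_mem_nonZeroDivisors q hq0)

lemma dilRF_apply (hq0 : q ≠ 0) (f : RatFunc ℂ) :
    dilRF q hq0 f = algebraMap _ _ (dilPoly q f.num) / algebraMap _ _ (dilPoly q f.denom) :=
  RatFunc.map_apply (dilPoly q) (dilPoly_mem_nonZeroDivisors q hq0) f

lemma dilRF_algebraMap (hq0 : q ≠ 0) (p : ℂ[X]) :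
    dilRF q hq0 (algebraMap _ _ p) = algebraMap _ _ (dilPoly q p) := by
  have h := RatFunc.map_apply_div (dilPoly q) (dilPoly_mem_nonZeroDivisors q hq0) p 1
  simpa [dilRF, RatFunc.coe_mapRingHom_eq_coe_map] using h

lemma algebraMap_dilPoly (p : ℂ[X]) :
    algebraMap ℂ[X] (RatFunc ℂ) (dilPoly q p)
      = Polynomial.eval₂ (RatFunc.C : ℂ →+* RatFunc ℂ) (RatFunc.C q * RatFunc.X) p := by
  rw [dilPoly_apply, Polynomial.comp, Polynomial.hom_eval₂]
  have h1 : (algebraMap ℂ[X] (RatFunc ℂ)).comp (Polynomial.C : ℂ →+* ℂ[X])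
      = (RatFunc.C : ℂ →+* RatFunc ℂ) := RingHom.ext fun a => RatFunc.algebraMap_C a
  have h2 : algebraMap ℂ[X] (RatFunc ℂ) (C q * X) = RatFunc.C q * RatFunc.X := by
    rw [map_mul, RatFunc.algebraMap_C, RatFunc.algebraMap_X]
  rw [h1, h2]

lemma qDil_eq_dilRF (hq0 : q ≠ 0) (f : RatFunc ℂ) :
    RatFunc.eval (RatFunc.C : ℂ →+* RatFunc ℂ) (RatFunc.C q * RatFunc.X) f = dilRF q hq0 f := by
  rw [RatFunc.eval, dilRF_apply, algebraMap_dilPoly, algebraMap_dilPoly]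

lemma dilRF_C (hq0 : q ≠ 0) (a : ℂ) : dilRF q hq0 (RatFunc.C a) = RatFunc.C a := by
  rw [← RatFunc.algebraMap_C, dilRF_algebraMap]
  congr 1
  simp [dilPoly_apply]

lemma dilRF_X (hq0 : q ≠ 0) : dilRF q hq0 RatFunc.X = RatFunc.C q * RatFunc.X := by
  rw [← RatFunc.algebraMap_X, dilRF_algebraMap, dilPoly_apply, Polynomial.X_comp]
  simp [RatFunc.algebraMap_C, RatFunc.algebraMap_X]


lemma coe_C' (a : ℂ) : ((RatFunc.C a : RatFunc ℂ) : LaurentSeries ℂ) = HahnSeries.C a := by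
  rw [← RatFunc.algebraMap_C]
  refine (RatFunc.coe_coe (Polynomial.C a)).symm.trans ?_
  rw [Polynomial.coe_C, PowerSeries.coe_C]

lemma coe_dilRF (hq0 : q ≠ 0) (f : RatFunc ℂ) :
    ((dilRF q hq0 f : RatFunc ℂ) : LaurentSeries ℂ) = scaleHom q hq0 (f : LaurentSeries ℂ) := by
  have key : (algebraMap (RatFunc ℂ) (LaurentSeries ℂ)).comp (dilRF q hq0)
      = (scaleHom q hq0).comp (algebraMap (RatFunc ℂ) (LaurentSeries ℂ)) := by
    apply IsLocalization.ringHom_ext ℂ[X]⁰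
    apply Polynomial.ringHom_ext'
    · refine RingHom.ext fun a => ?_
      simp only [RingHom.coe_comp, Function.comp_apply, AlgHom.toRingHom_eq_coe,
        RingHom.coe_coe]
      rw [RatFunc.algebraMap_C, dilRF_C, coe_C', scaleHom_C]
    · simp only [RingHom.coe_comp, Function.comp_apply, AlgHom.toRingHom_eq_coe,
        RingHom.coe_coe]
      rw [RatFunc.algebraMap_X, dilRF_X, map_mul,
        coe_C', RatFunc.coe_X, scaleHom_single, HahnSeries.C_apply,
        HahnSeries.single_mul_single, zero_add, zpow_one, mul_one]
  have := RingHom.congr_fun key f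
  simpa using this

lemma laurent_dilRF (hq0 : q ≠ 0) (c : ℂ) (f : RatFunc ℂ) :
    RatFunc.laurent c (dilRF q hq0 f) = dilRF q hq0 (RatFunc.laurent (q * c) f) := by
  have key : (RatFunc.laurent c).toRingHom.comp (dilRF q hq0)
      = (dilRF q hq0).comp (RatFunc.laurent (q * c)).toRingHom := by
    apply IsLocalization.ringHom_ext ℂ[X]⁰
    apply Polynomial.ringHom_ext'
    · refine RingHom.ext fun a => ?_
      simp only [RingHom.coe_comp, Function.comp_apply, AlgHom.toRingHom_eq_coe,
        RingHom.coe_coe]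
      rw [RatFunc.algebraMap_C, dilRF_C, RatFunc.laurent_C, RatFunc.laurent_C, dilRF_C]
    · simp only [RingHom.coe_comp, Function.comp_apply, AlgHom.toRingHom_eq_coe,
        RingHom.coe_coe]
      rw [RatFunc.algebraMap_X, dilRF_X, map_mul, RatFunc.laurent_C, RatFunc.laurent_X,
        RatFunc.laurent_X, map_add, dilRF_X, dilRF_C, mul_add,
        (map_mul (RatFunc.C : ℂ →+* RatFunc ℂ) q c : RatFunc.C (q * c) = _)]
  have := RingHom.congr_fun key f
  simpa using this

/-- The underlying function of the `q`-residue-like functional: the coefficient of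
`(X - c)⁻ʲ` in the Laurent expansion at `c`. -/
def resjFun (j : ℕ) (c : ℂ) (g : RatFunc ℂ) : ℂ :=
  ((RatFunc.laurent c g : RatFunc ℂ) : LaurentSeries ℂ).coeff (-(j : ℤ))

/-- The coefficient of `(X - c)⁻ʲ` in the Laurent expansion at `c`, as an additive hom. -/
def resj (j : ℕ) (c : ℂ) : RatFunc ℂ →+ ℂ :=
  AddMonoidHom.mk' (resjFun j c) (fun g h => by
    simp [resjFun, map_add])

lemma resj_apply (j : ℕ) (c : ℂ) (g : RatFunc ℂ) :
    resj j c g = ((RatFunc.laurent c g : RatFunc ℂ) : LaurentSeries ℂ).coeff (-(j : ℤ)) := rfl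

lemma resj_dilRF (hq0 : q ≠ 0) (j : ℕ) (c : ℂ) (f : RatFunc ℂ) :
    resj j c (dilRF q hq0 f) = q ^ (-(j : ℤ)) * resj j (q * c) f := by
  rw [resj_apply, resj_apply, laurent_dilRF, coe_dilRF, scaleHom_coeff]

lemma coeff_neg_of_denom (h : RatFunc ℂ) (hd : Polynomial.eval 0 h.denom ≠ 0) (n : ℤ)
    (hn : n < 0) : (h : LaurentSeries ℂ).coeff n = 0 := by
  have hc : PowerSeries.constantCoeff (h.denom : PowerSeries ℂ) ≠ 0 := by
    rwa [← PowerSeries.coeff_zero_eq_constantCoeff_apply, Polynomial.coeff_coe,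
      Polynomial.coeff_zero_eq_eval_zero]
  obtain ⟨u, hu⟩ : IsUnit ((h.denom : PowerSeries ℂ)) :=
    PowerSeries.isUnit_iff_constantCoeff.mpr (isUnit_iff_ne_zero.mpr hc)
  have hinv : (HahnSeries.ofPowerSeries ℤ ℂ (h.denom : PowerSeries ℂ))⁻¹
      = HahnSeries.ofPowerSeries ℤ ℂ ↑u⁻¹ := by
    rw [← hu]
    refine inv_eq_of_mul_eq_one_right ?_
    rw [← map_mul, Units.mul_inv, map_one]
  have key : (h : LaurentSeries ℂ)
      = HahnSeries.ofPowerSeries ℤ ℂ ((h.num : PowerSeries ℂ) * ↑u⁻¹) := by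
    conv_lhs => rw [← RatFunc.num_div_denom h]
    have hpc : ∀ P : ℂ[X], algebraMap (RatFunc ℂ) (LaurentSeries ℂ) (algebraMap ℂ[X] (RatFunc ℂ) P)
        = HahnSeries.ofPowerSeries ℤ ℂ (P : PowerSeries ℂ) := fun P => (RatFunc.coe_coe P).symm
    rw [map_div₀, div_eq_mul_inv, hpc, hpc,
      hinv, map_mul]
  rw [key, PowerSeries.coeff_coe, if_pos hn]

lemma resj_eq_zero (j : ℕ) (hj : 1 ≤ j) (c : ℂ) (g : RatFunc ℂ)
    (hd : Polynomial.eval c g.denom ≠ 0) : resj j c g = 0 := by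
  have h1 : RatFunc.laurent c g
      = algebraMap _ _ (taylor c g.num) / algebraMap _ _ (taylor c g.denom) := by
    rw [← RatFunc.laurent_div, RatFunc.num_div_denom]
  have hden0 : taylor c g.denom ≠ 0 := by
    intro h
    exact RatFunc.denom_ne_zero g (by rwa [LinearMap.map_eq_zero_iff _ (taylor_injective c)] at h)
  have hdvd : (RatFunc.laurent c g).denom ∣ taylor c g.denom :=
    (RatFunc.denom_dvd hden0).mpr ⟨taylor c g.num, h1⟩
  have heval : Polynomial.eval 0 (taylor c g.denom) ≠ 0 := by
    rw [Polynomial.taylor_eval]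
    simpa using hd
  have h2 : Polynomial.eval 0 (RatFunc.laurent c g).denom ≠ 0 := by
    obtain ⟨r, hr⟩ := hdvd
    rw [hr, Polynomial.eval_mul] at heval
    exact left_ne_zero_of_mul heval
  have hneg : (-(j : ℤ)) < 0 := by
    have : (0 : ℤ) < (j : ℤ) := by exact_mod_cast hj
    omega
  exact coeff_neg_of_denom _ h2 _ hneg

lemma resj_same (j : ℕ) (c a : ℂ) :
    resj j c (RatFunc.C a * ((RatFunc.X - RatFunc.C c) ^ j)⁻¹) = a := by
  rw [resj_apply, map_mul, RatFunc.laurent_C, map_inv₀, map_pow, map_sub, RatFunc.laurent_X,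
    RatFunc.laurent_C, add_sub_cancel_right, ← div_eq_mul_inv, map_div₀, map_pow,
    coe_C', RatFunc.coe_X]
  have hpow : (HahnSeries.single (1 : ℤ) (1 : ℂ)) ^ j = HahnSeries.single (j : ℤ) (1 : ℂ) := by
    rw [HahnSeries.single_pow]
    simp
  have hinv : (HahnSeries.single ((j : ℤ)) (1 : ℂ))⁻¹ = HahnSeries.single (-(j : ℤ)) (1 : ℂ) := by
    rw [HahnSeries.inv_single, inv_one]
  rw [hpow, div_eq_mul_inv, hinv, HahnSeries.C_apply, HahnSeries.single_mul_single, zero_add,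
    mul_one, HahnSeries.coeff_single_same]

lemma resj_other (j : ℕ) (hj : 1 ≤ j) (c c' a : ℂ) (hne : c' ≠ c) :
    resj j c (RatFunc.C a * ((RatFunc.X - RatFunc.C c') ^ j)⁻¹) = 0 := by
  have hden0 : (Polynomial.X - Polynomial.C c') ^ j ≠ 0 :=
    pow_ne_zero _ (Polynomial.X_sub_C_ne_zero c')
  have hg : RatFunc.C a * ((RatFunc.X - RatFunc.C c') ^ j)⁻¹
      = algebraMap ℂ[X] (RatFunc ℂ) (Polynomial.C a)
        / algebraMap ℂ[X] (RatFunc ℂ) ((Polynomial.X - Polynomial.C c') ^ j) := by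
    rw [div_eq_mul_inv, RatFunc.algebraMap_C, map_pow, map_sub, RatFunc.algebraMap_X,
      RatFunc.algebraMap_C]
  have hdvd : (RatFunc.C a * ((RatFunc.X - RatFunc.C c') ^ j)⁻¹).denom
      ∣ (Polynomial.X - Polynomial.C c') ^ j :=
    (RatFunc.denom_dvd hden0).mpr ⟨Polynomial.C a, hg⟩
  apply resj_eq_zero j hj
  obtain ⟨r, hr⟩ := hdvd
  intro h0
  have : Polynomial.eval c ((Polynomial.X - Polynomial.C c') ^ j) ≠ 0 := by
    rw [Polynomial.eval_pow, Polynomial.eval_sub, Polynomial.eval_X, Polynomial.eval_C]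
    exact pow_ne_zero _ (sub_ne_zero.mpr (fun h => hne h.symm))
  rw [hr, Polynomial.eval_mul, h0, zero_mul] at this
  exact this rfl

end QRes
end

/-- Let `q ∈ ℂ*` not a root of unity, `β ∈ ℂ*`, `j ≥ 1`, and let
`b(s) = Σ_{ℓ=0}^{d} α_ℓ / (s − q^ℓ β)^j`. If `b` is `q`-summable in `ℂ(s)`, then its
`q`-residue `Σ_{ℓ=0}^{d} q^{−ℓ j} α_ℓ` equals `0`. -/
theorem stmt3 (q β : ℂ) (hq0 : q ≠ 0) (hq : ∀ n : ℕ, 0 < n → q ^ n ≠ 1) (hβ : β ≠ 0)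
    (j : ℕ) (hj : 1 ≤ j) (d : ℕ) (α : ℕ → ℂ) (b : RatFunc ℂ)
    (hb : b = ∑ ℓ ∈ Finset.range (d + 1),
      RatFunc.C (α ℓ) * ((RatFunc.X - RatFunc.C (q ^ ℓ * β)) ^ j)⁻¹)
    (hsum : ∃ f : RatFunc ℂ, b = qDil q f - f) :
    ∑ ℓ ∈ Finset.range (d + 1), (q ^ (ℓ * j))⁻¹ * α ℓ = 0 := by
  classical
  obtain ⟨f, hf⟩ := hsum
  have hqd : qDil q f = QRes.dilRF q hq0 f := QRes.qDil_eq_dilRF q hq0 f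
  have hb' : b = QRes.dilRF q hq0 f - f := by rw [hf, hqd]
  -- injectivity of k ↦ q^k β
  have hzpow1 : ∀ m : ℤ, q ^ m = 1 → m = 0 := by
    intro m hm
    by_contra h0
    have hpos : 0 < m.natAbs := by omega
    apply hq m.natAbs hpos
    have key : (q : ℂ) ^ ((m.natAbs : ℤ)) = 1 := by
      rcases Int.natAbs_eq m with he | he
      · rw [← he, hm]
      · rw [(by omega : ((m.natAbs : ℤ)) = -m), zpow_neg, hm, inv_one]
    rwa [zpow_natCast] at key
  have hCinj : ∀ k l : ℤ, q ^ k * β = q ^ l * β → k = l := by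
    intro k l he
    have h1 : (q : ℂ) ^ k = q ^ l := mul_right_cancel₀ hβ he
    have h2 : (q : ℂ) ^ (k - l) = 1 := by
      rw [zpow_sub₀ hq0, h1, div_self (zpow_ne_zero _ hq0)]
    have := hzpow1 _ h2
    omega
  -- value of the residue functional on b
  have hresb : ∀ k : ℤ, QRes.resj j (q ^ k * β) b
      = if h : 0 ≤ k ∧ k ≤ (d : ℤ) then α k.toNat else 0 := by
    intro k
    rw [hb, map_sum]
    split_ifs with h
    · have hk0 : ((k.toNat : ℤ)) = k := Int.toNat_of_nonneg h.1
      rw [Finset.sum_eq_single k.toNat]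
      · have hc : (q : ℂ) ^ (k.toNat) * β = q ^ k * β := by
          rw [← zpow_natCast q k.toNat, hk0]
        rw [hc]
        exact QRes.resj_same j _ _
      · intro ℓ hℓ hne
        apply QRes.resj_other j hj
        intro heq
        rw [← zpow_natCast q ℓ] at heq
        have := hCinj _ _ heq
        omega
      · intro hmem
        exfalso
        apply hmem
        rw [Finset.mem_range]
        omega
    · apply Finset.sum_eq_zero
      intro ℓ hℓ
      apply QRes.resj_other j hj
      intro heq
      rw [← zpow_natCast q ℓ] at heq
      have := hCinj _ _ heq
      rw [Finset.mem_range] at hℓ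
      omega
  -- finiteness of the poles of f along the orbit
  have hfin : {k : ℤ | QRes.resj j (q ^ k * β) f ≠ 0}.Finite := by
    have hroots : ((f.denom.roots.toFinset : Finset ℂ) : Set ℂ).Finite :=
      (f.denom.roots.toFinset : Finset ℂ).finite_toSet
    apply Set.Finite.subset
      (Set.Finite.preimage (f := fun k : ℤ => q ^ k * β)
        (fun a _ b _ hab => hCinj a b hab) hroots)
    intro k hk
    simp only [Set.mem_setOf_eq] at hk
    simp only [Set.mem_preimage, Finset.coe_sort_coe, Finset.mem_coe, Multiset.mem_toFinset]
    rw [Polynomial.mem_roots (RatFunc.denom_ne_zero f)]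
    by_contra h0
    exact hk (QRes.resj_eq_zero j hj _ f h0)
  obtain ⟨A, hA⟩ := hfin.bddAbove
  obtain ⟨B, hB⟩ := hfin.bddBelow
  set N : ℕ := A.natAbs + B.natAbs + d + 1 with hNdef
  have hNd : d + 1 ≤ N := by omega
  have hN : ∀ k : ℤ, ((N : ℤ) ≤ k ∨ k ≤ -(N : ℤ)) → QRes.resj j (q ^ k * β) f = 0 := by
    intro k hk
    by_contra h0
    have h1 : k ≤ A := hA h0
    have h2 : B ≤ k := hB h0
    omega
  -- the telescoping function
  set g : ℕ → ℂ := fun i =>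
    q ^ (-(((i : ℤ) - N) * j)) * QRes.resj j (q ^ ((i : ℤ) - N) * β) f with hgdef
  have hterm : ∀ i : ℕ,
      g (i + 1) - g i = q ^ (-(((i : ℤ) - N) * j)) * QRes.resj j (q ^ ((i : ℤ) - N) * β) b := by
    intro i
    set k : ℤ := (i : ℤ) - N with hkdef
    have hresbk : QRes.resj j (q ^ k * β) b
        = q ^ (-(j : ℤ)) * QRes.resj j (q ^ (k + 1) * β) f - QRes.resj j (q ^ k * β) f := by
      rw [hb', map_sub, QRes.resj_dilRF q hq0]
      have hc : q * (q ^ k * β) = q ^ (k + 1) * β := by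
        rw [zpow_add₀ hq0, zpow_one]
        ring
      rw [hc]
    have hcast : ((i + 1 : ℕ) : ℤ) - N = k + 1 := by
      rw [hkdef]
      push_cast
      ring
    have hgi1 : g (i + 1) = q ^ (-((k + 1) * j)) * QRes.resj j (q ^ (k + 1) * β) f := by
      rw [hgdef]
      simp only
      rw [hcast]
    rw [hgi1, hgdef, hresbk]
    simp only
    rw [← hkdef, mul_sub, ← mul_assoc, ← zpow_add₀ hq0]
    congr 3
    ring
  have htel : ∑ i ∈ Finset.range (2 * N),
      (q ^ (-(((i : ℤ) - N) * j)) * QRes.resj j (q ^ ((i : ℤ) - N) * β) b) = 0 := by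
    have hg2N : g (2 * N) = 0 := by
      have hz : QRes.resj j (q ^ (((2 * N : ℕ) : ℤ) - (N : ℤ)) * β) f = 0 :=
        hN _ (by push_cast; omega)
      simp only [hgdef, hz, mul_zero]
    have hg0 : g 0 = 0 := by
      have hz : QRes.resj j (q ^ (((0 : ℕ) : ℤ) - (N : ℤ)) * β) f = 0 :=
        hN _ (by push_cast; omega)
      simp only [hgdef, hz, mul_zero]
    calc ∑ i ∈ Finset.range (2 * N),
        (q ^ (-(((i : ℤ) - N) * j)) * QRes.resj j (q ^ ((i : ℤ) - N) * β) b)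
        = ∑ i ∈ Finset.range (2 * N), (g (i + 1) - g i) :=
          Finset.sum_congr rfl (fun i _ => (hterm i).symm)
      _ = g (2 * N) - g 0 := Finset.sum_range_sub g (2 * N)
      _ = 0 := by rw [hg2N, hg0, sub_zero]
  -- identify the telescoped sum with the q-residue
  have himg : (Finset.range (d + 1)).image (fun ℓ => ℓ + N) ⊆ Finset.range (2 * N) := by
    intro x hx
    simp only [Finset.mem_image, Finset.mem_range] at hx ⊢
    obtain ⟨ℓ, hℓ, rfl⟩ := hx
    omega
  have hoff : ∀ x ∈ Finset.range (2 * N), x ∉ (Finset.range (d + 1)).image (fun ℓ => ℓ + N) →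
      q ^ (-(((x : ℤ) - N) * j)) * QRes.resj j (q ^ ((x : ℤ) - N) * β) b = 0 := by
    intro x hx hnx
    rw [hresb, dif_neg, mul_zero]
    intro hcon
    apply hnx
    simp only [Finset.mem_image, Finset.mem_range]
    refine ⟨x - N, by omega, by omega⟩
  calc ∑ ℓ ∈ Finset.range (d + 1), (q ^ (ℓ * j))⁻¹ * α ℓ
      = ∑ ℓ ∈ Finset.range (d + 1),
        (q ^ (-(((((ℓ + N : ℕ)) : ℤ) - N) * j))
          * QRes.resj j (q ^ ((((ℓ + N : ℕ)) : ℤ) - N) * β) b) := by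
        refine Finset.sum_congr rfl (fun ℓ hℓ => ?_)
        rw [Finset.mem_range] at hℓ
        have hcast : (((ℓ + N : ℕ)) : ℤ) - N = (ℓ : ℤ) := by push_cast; ring
        rw [hcast, hresb, dif_pos ⟨Int.natCast_nonneg ℓ, by omega⟩]
        have h1 : ((ℓ : ℤ)).toNat = ℓ := by omega
        rw [h1, ← zpow_natCast q (ℓ * j), ← zpow_neg]
        have h2 : -((ℓ * j : ℕ) : ℤ) = -((ℓ : ℤ) * (j : ℤ)) := by push_cast; ring
        rw [h2]
    _ = ∑ x ∈ (Finset.range (d + 1)).image (fun ℓ => ℓ + N),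
        (q ^ (-(((x : ℤ) - N) * j)) * QRes.resj j (q ^ ((x : ℤ) - N) * β) b) := by
        rw [Finset.sum_image (fun a _ b _ hab => by omega)]
    _ = ∑ x ∈ Finset.range (2 * N),
        (q ^ (-(((x : ℤ) - N) * j)) * QRes.resj j (q ^ ((x : ℤ) - N) * β) b) :=
        Finset.sum_subset himg hoff
    _ = 0 := htel
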